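/- (Converse direction of Theorem 2.1, n = 1, lower inequality) Let A₁, A₂, A₃ be strictly positive operators. Suppose that for all p₂ ≥ 1 the inequality A₃ ≥ { A₃ (A₂^{-1/2} A₁ A₂^{-1/2})^{p₂} A₃ }^{1/2} holds (the case p₁ = 1, t = 1, r = 2). Then A₂ ≥ A₁. -/

import Mathlib

noncomputable section

variable {H : Type*} [NormedAddCommGroup H] [InnerProductSpace ℂ H] [CompleteSpace H]

set_option maxHeartbeats 1000000 in
/-- Converse direction of Theorem 2.1 for n = 1 (lower inequality). -/
theorem thm21_converse_n1 (A₁ A₂ A₃ : H →L[ℂ] H)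
    (hA₁ : 0 ≤ A₁) (hA₁inv : IsUnit A₁) (hA₂ : 0 ≤ A₂) (hA₂inv : IsUnit A₂)
    (hA₃ : 0 ≤ A₃) (hA₃inv : IsUnit A₃)
    (h : ∀ p₂ : ℝ, 1 ≤ p₂ →
      (A₃ * (A₂ ^ (-(1 / 2) : ℝ) * A₁ * A₂ ^ (-(1 / 2) : ℝ)) ^ p₂ * A₃) ^ ((1 : ℝ) / 2) ≤ A₃) :
    A₁ ≤ A₂ := by
  have hσ₂ : (0 : NNReal) ∉ spectrum NNReal A₂ := spectrum.zero_notMem NNReal hA₂inv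
  set C : H →L[ℂ] H := A₂ ^ (-(1 / 2) : ℝ) with hCdef
  set B : H →L[ℂ] H := C * A₁ * C with hBdef
  have hC : (0 : H →L[ℂ] H) ≤ C := CFC.rpow_nonneg
  have hCsa : star C = C := IsSelfAdjoint.of_nonneg hC
  have hB : (0 : H →L[ℂ] H) ≤ B := by
    rw [hBdef]; nth_rewrite 1 [← hCsa]; exact star_left_conjugate_nonneg hA₁ C
  have hBsa : IsSelfAdjoint B := .of_nonneg hB
  have hA₃sa : star A₃ = A₃ := IsSelfAdjoint.of_nonneg hA₃
  set U := hA₃inv.unit with hUdef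
  have hUval : (U : H →L[ℂ] H) = A₃ := rfl
  set K : ℝ := ‖(↑U⁻¹ : H →L[ℂ] H)‖ * (‖A₃‖ * ‖A₃‖) * ‖(↑U⁻¹ : H →L[ℂ] H)‖ with hKdef
  -- key norm bound for all p ≥ 1
  have key : ∀ p : ℝ, 1 ≤ p → ‖B ^ p‖ ≤ K := by
    intro p hp
    set X : H →L[ℂ] H := A₃ * B ^ p * A₃ with hXdef
    have hBp : (0 : H →L[ℂ] H) ≤ B ^ p := CFC.rpow_nonneg
    have hX : (0 : H →L[ℂ] H) ≤ X := by
      rw [hXdef]; nth_rewrite 1 [← hA₃sa]; exact star_left_conjugate_nonneg hBp A₃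
    have h1 : ‖X ^ ((1 : ℝ) / 2)‖ ≤ ‖A₃‖ :=
      CStarAlgebra.norm_le_norm_of_nonneg_of_le CFC.rpow_nonneg (h p hp)
    have h2 : ‖X‖ ≤ ‖A₃‖ * ‖A₃‖ := by
      have hsq : X ^ ((1 : ℝ) / 2) * X ^ ((1 : ℝ) / 2) = X := by
        rw [← CFC.sqrt_eq_rpow, CFC.sqrt_mul_sqrt_self X hX]
      have hsa : star (X ^ ((1 : ℝ) / 2)) = X ^ ((1 : ℝ) / 2) :=
        IsSelfAdjoint.of_nonneg CFC.rpow_nonneg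
      calc ‖X‖ = ‖star (X ^ ((1 : ℝ) / 2)) * X ^ ((1 : ℝ) / 2)‖ := by rw [hsa, hsq]
        _ = ‖X ^ ((1 : ℝ) / 2)‖ * ‖X ^ ((1 : ℝ) / 2)‖ := CStarRing.norm_star_mul_self
        _ ≤ ‖A₃‖ * ‖A₃‖ := by
            have := norm_nonneg (X ^ ((1 : ℝ) / 2))
            exact mul_le_mul h1 h1 this (norm_nonneg A₃)
    have h3 : B ^ p = (↑U⁻¹ : H →L[ℂ] H) * X * (↑U⁻¹ : H →L[ℂ] H) := by
      have e1 : (↑U⁻¹ : H →L[ℂ] H) * A₃ = 1 := by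
        rw [← hUval]; exact U.inv_mul
      have e2 : A₃ * (↑U⁻¹ : H →L[ℂ] H) = 1 := by
        rw [← hUval]; exact U.mul_inv
      calc B ^ p = 1 * B ^ p * 1 := by rw [one_mul, mul_one]
        _ = ((↑U⁻¹ : H →L[ℂ] H) * A₃) * B ^ p * (A₃ * (↑U⁻¹ : H →L[ℂ] H)) := by
            rw [e1, e2]
        _ = (↑U⁻¹ : H →L[ℂ] H) * X * (↑U⁻¹ : H →L[ℂ] H) := by
            rw [hXdef]; noncomm_ring
    calc ‖B ^ p‖ = ‖(↑U⁻¹ : H →L[ℂ] H) * X * (↑U⁻¹ : H →L[ℂ] H)‖ := by rw [h3]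
      _ ≤ ‖(↑U⁻¹ : H →L[ℂ] H) * X‖ * ‖(↑U⁻¹ : H →L[ℂ] H)‖ := norm_mul_le _ _
      _ ≤ ‖(↑U⁻¹ : H →L[ℂ] H)‖ * ‖X‖ * ‖(↑U⁻¹ : H →L[ℂ] H)‖ :=
          mul_le_mul_of_nonneg_right (norm_mul_le _ _) (norm_nonneg _)
      _ ≤ K := by rw [hKdef]; gcongr
  -- norm of B is at most 1
  have hBnorm : ‖B‖ ≤ 1 := by
    by_contra hcon
    push_neg at hcon
    obtain ⟨n, hn⟩ := pow_unbounded_of_one_lt K hcon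
    have hpow : ‖B‖ ^ n ≤ ‖B‖ ^ (2 ^ n) :=
      pow_le_pow_right₀ hcon.le (Nat.lt_two_pow_self (n := n)).le
    have hkeyn : ‖B ^ ((2 ^ n : ℕ) : ℝ)‖ ≤ K := by
      apply key
      exact_mod_cast Nat.one_le_two_pow
    rw [CFC.rpow_natCast B (2 ^ n) hB] at hkeyn
    have hnn : ‖B ^ (2 ^ n : ℕ)‖₊ = ‖B‖₊ ^ (2 ^ n : ℕ) := hBsa.nnnorm_pow_two_pow n
    have hnrm : ‖B ^ (2 ^ n : ℕ)‖ = ‖B‖ ^ (2 ^ n : ℕ) := by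
      have := congrArg ((↑) : NNReal → ℝ) hnn
      push_cast at this
      simpa using this
    rw [hnrm] at hkeyn
    exact absurd (hn.trans_le (hpow.trans hkeyn)) (lt_irrefl _)
  have hB1 : B ≤ 1 := (CStarAlgebra.norm_le_one_iff_of_nonneg B hB).mp hBnorm
  -- conjugate by A₂ ^ (1/2)
  set S : H →L[ℂ] H := A₂ ^ ((1 : ℝ) / 2) with hSdef
  have hS : (0 : H →L[ℂ] H) ≤ S := CFC.rpow_nonneg
  have hSsa : star S = S := IsSelfAdjoint.of_nonneg hS
  have hSC : S * C = 1 := by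
    rw [hSdef, hCdef]
    exact CFC.rpow_mul_rpow_neg (1 / 2 : ℝ) (IsStrictlyPositive.iff_of_unital.mpr ⟨hA₂, hA₂inv⟩)
  have hCS : C * S = 1 := by
    rw [hSdef, hCdef]
    exact CFC.rpow_neg_mul_rpow (1 / 2 : ℝ) (IsStrictlyPositive.iff_of_unital.mpr ⟨hA₂, hA₂inv⟩)
  have hconj := star_left_conjugate_le_conjugate hB1 S
  rw [hSsa] at hconj
  have lhs_eq : S * B * S = A₁ := by
    calc S * B * S = (S * C) * A₁ * (C * S) := by rw [hBdef]; noncomm_ring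
      _ = A₁ := by rw [hSC, hCS, one_mul, mul_one]
  have rhs_eq : S * 1 * S = A₂ := by
    rw [mul_one, hSdef, ← CFC.rpow_add hA₂inv]
    norm_num
    exact CFC.rpow_one A₂ hA₂
  rwa [lhs_eq, rhs_eq] at hconj
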